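/- Let k be a positive integer and h : ℝ → ℂ be k times continuously differentiable. Then for all t ≠ 0, (Λᵏh)(t) = -k!·t^{-k}·(h(0) - Σ_{j=0}^{k} h^{(j)}(t)·(-t)^j/j!) = (-1)^k · ∫_0^1 [h^{(k)}(t) - h^{(k)}(αt)]·k·α^{k-1} dα, and (Λᵏh)(0) = 0. -/

import Mathlib

open MeasureTheory Filter Set
open scoped Real Topology

/-- The operator `Λ`: `(Λh)(t) = -(h(0) - [h(t) + h'(t)(-t)])/t` for `t ≠ 0`, `(Λh)(0) = 0`. -/
noncomputable def Lam (h : ℝ → ℂ) (t : ℝ) : ℂ :=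
  if t = 0 then 0 else -((h 0 - (h t + deriv h t * (-(t : ℂ)))) / (t : ℂ))

lemma sum_hasDerivAt (h : ℝ → ℂ) (n : ℕ) (hC : ContDiff ℝ (n+1) h) (x : ℝ) :
    HasDerivAt (fun s : ℝ => ∑ j ∈ Finset.range (n+1),
        iteratedDeriv j h s * (-(s:ℂ))^j / (Nat.factorial j : ℂ))
      (iteratedDeriv (n+1) h x * (-(x:ℂ))^n / (Nat.factorial n : ℂ)) x := by
  set f : ℕ → ℂ := fun j => iteratedDeriv j h x * (-(x:ℂ))^(j-1) * j / (Nat.factorial j : ℂ) with hf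
  have key : ∀ j ∈ Finset.range (n+1),
      HasDerivAt (fun s : ℝ => iteratedDeriv j h s * (-(s:ℂ))^j / (Nat.factorial j : ℂ))
        (f (j+1) - f j) x := by
    intro j hj
    rw [Finset.mem_range, Nat.lt_succ_iff] at hj
    have hdiff : DifferentiableAt ℝ (iteratedDeriv j h) x :=
      (hC.differentiable_iteratedDeriv j (by exact_mod_cast Nat.lt_succ_of_le hj)) x
    have hd : HasDerivAt (iteratedDeriv j h) (iteratedDeriv (j+1) h x) x := by
      rw [iteratedDeriv_succ]; exact hdiff.hasDerivAt
    have hp : HasDerivAt (fun s : ℝ => (-(s:ℂ))^j) ((j:ℂ) * (-(x:ℂ))^(j-1) * (-1)) x :=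
      (((hasDerivAt_id ((x:ℝ):ℂ)).neg).pow j).comp_ofReal
    have H := (hd.mul hp).div_const ((Nat.factorial j : ℂ))
    convert H using 1
    · rfl
    · rfl
    simp only [hf]
    rcases j with _ | m
    · simp
    · have hfac : (((m+1)+1).factorial : ℂ) = ((m:ℂ)+2) * ((m+1).factorial : ℂ) := by
        rw [Nat.factorial_succ]; push_cast; ring
      have h1 : ((m+1).factorial : ℂ) ≠ 0 := by exact_mod_cast (Nat.factorial_ne_zero _)
      have h2 : ((m:ℂ)+2) ≠ 0 := by
        exact_mod_cast Nat.cast_add_one_ne_zero (R := ℂ) (m+1)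
      simp only [Nat.add_sub_cancel, hfac]
      push_cast
      field_simp
      ring
  have H := HasDerivAt.sum key
  rw [Finset.sum_range_sub f (n+1)] at H
  convert H using 1
  · rfl
  · ext s; rw [Finset.sum_apply]
  have hfac : ((n+1).factorial : ℂ) = ((n:ℂ)+1) * (n.factorial : ℂ) := by
    rw [Nat.factorial_succ]; push_cast; ring
  have h1 : (n.factorial : ℂ) ≠ 0 := by exact_mod_cast (Nat.factorial_ne_zero _)
  have h2 : ((n:ℂ)+1) ≠ 0 := Nat.cast_add_one_ne_zero (R := ℂ) n
  simp only [hf, Nat.add_sub_cancel, hfac]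
  push_cast
  field_simp
  ring

noncomputable def Fk (k : ℕ) (h : ℝ → ℂ) (t : ℝ) : ℂ :=
  -(Nat.factorial k : ℂ) * ((t : ℂ)⁻¹) ^ k *
    (h 0 - ∑ j ∈ Finset.range (k + 1),
      iteratedDeriv j h t * (-(t : ℂ)) ^ j / (Nat.factorial j : ℂ))

lemma lam_iter_zero (k : ℕ) (hk : 0 < k) (h : ℝ → ℂ) : Lam^[k] h 0 = 0 := by
  obtain ⟨m, rfl⟩ := Nat.exists_eq_succ_of_ne_zero hk.ne'
  rw [Function.iterate_succ_apply']
  simp [Lam]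

set_option maxRecDepth 8000 in
lemma formula (m : ℕ) : ∀ h : ℝ → ℂ, ContDiff ℝ (m+1) h → ∀ t : ℝ, t ≠ 0 →
    Lam^[m+1] h t = Fk (m+1) h t := by
  induction m with
  | zero =>
    intro h hC t ht
    have htC : (t:ℂ) ≠ 0 := Complex.ofReal_ne_zero.mpr ht
    rw [zero_add, Function.iterate_one, Lam, if_neg ht, Fk]
    rw [Finset.sum_range_succ, Finset.sum_range_one]
    simp only [iteratedDeriv_zero, iteratedDeriv_one]
    norm_num [Nat.factorial]
    field_simp
  | succ m ih =>
    intro h hC t ht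
    have htC : (t:ℂ) ≠ 0 := Complex.ofReal_ne_zero.mpr ht
    have hCm : ContDiff ℝ (m+1) h := hC.of_le (by exact_mod_cast Nat.le_succ _)
    set g := Lam^[m+1] h with hg
    have hfe : g =ᶠ[𝓝 t] Fk (m+1) h := by
      filter_upwards [isOpen_compl_singleton.mem_nhds
        (by simpa using ht : t ∈ ({0}ᶜ : Set ℝ))] with s hs
      exact ih h hCm s hs
    have hS : HasDerivAt (fun s : ℝ => h 0 - ∑ j ∈ Finset.range (m+1+1),
          iteratedDeriv j h s * (-(s:ℂ))^j / (Nat.factorial j : ℂ))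
        (0 - iteratedDeriv (m+1+1) h t * (-(t:ℂ))^(m+1) / (Nat.factorial (m+1) : ℂ)) t :=
      (hasDerivAt_const t (h 0)).sub (sum_hasDerivAt h (m+1) hC t)
    have hinv : HasDerivAt (fun z : ℂ => z⁻¹) (-1 / (t:ℂ)^2) (t:ℂ) := by
      have := (hasDerivAt_id ((t:ℝ):ℂ)).inv htC; exact this
    have hI : HasDerivAt (fun s : ℝ => ((s:ℂ)⁻¹)^(m+1))
        (((m+1:ℕ):ℂ) * ((t:ℂ)⁻¹)^(m+1-1) * (-1 / (t:ℂ)^2)) t :=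
      (hinv.pow (m+1)).comp_ofReal
    have hF := (hI.const_mul (-(Nat.factorial (m+1) : ℂ))).mul hS
    have hFk : Fk (m+1) h = fun s : ℝ => -(Nat.factorial (m+1) : ℂ) * ((s:ℂ)⁻¹)^(m+1) *
        (h 0 - ∑ j ∈ Finset.range (m+1+1),
          iteratedDeriv j h s * (-(s:ℂ))^j / (Nat.factorial j : ℂ)) := rfl
    have hderiv : deriv g t
        = -(Nat.factorial (m+1) : ℂ) * (((m+1:ℕ):ℂ) * ((t:ℂ)⁻¹)^(m+1-1) * (-1 / (t:ℂ)^2)) *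
            (h 0 - ∑ j ∈ Finset.range (m+1+1),
              iteratedDeriv j h t * (-(t:ℂ))^j / (Nat.factorial j : ℂ))
          + -(Nat.factorial (m+1) : ℂ) * ((t:ℂ)⁻¹)^(m+1) *
            (0 - iteratedDeriv (m+1+1) h t * (-(t:ℂ))^(m+1) / (Nat.factorial (m+1) : ℂ)) := by
      rw [hfe.deriv_eq, hFk]
      exact hF.deriv
    rw [Function.iterate_succ_apply', ← hg]
    have hg0 : g 0 = 0 := lam_iter_zero (m+1) (Nat.succ_pos m) h
    have hgt : g t = Fk (m+1) h t := ih h hCm t ht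
    rw [Lam, if_neg ht, hg0, hderiv, hgt]
    rw [Fk, Fk]
    rw [Finset.sum_range_succ
      (fun j => iteratedDeriv j h t * (-(t:ℂ))^j / (Nat.factorial j : ℂ)) (m+1+1)]
    have hfac1 : ((m+1+1).factorial : ℂ) = ((m:ℂ)+2) * ((m+1).factorial : ℂ) := by
      rw [Nat.factorial_succ]; push_cast; ring
    have hfacne : ((m+1).factorial : ℂ) ≠ 0 := by exact_mod_cast (Nat.factorial_ne_zero _)
    have h2 : ((m:ℂ)+2) ≠ 0 := by exact_mod_cast Nat.cast_add_one_ne_zero (R := ℂ) (m+1)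
    have htk : ((t:ℂ))^m ≠ 0 := pow_ne_zero _ htC
    have hnt : ∀ n : ℕ, (-(t:ℂ))^n = (-1)^n * (t:ℂ)^n := fun n => neg_pow _ _
    simp only [Nat.add_sub_cancel, hnt, inv_pow, hfac1, Nat.cast_add, Nat.cast_one]
    field_simp
    have hY : (t:ℂ) ^ (m + 1) * ((t:ℂ) ^ m * (t:ℂ) ^ 2 * ((t:ℂ) ^ (m + 1) * ((m + 1).factorial : ℂ))) * (t:ℂ) ≠ 0 :=
      mul_ne_zero (mul_ne_zero (pow_ne_zero _ htC)
        (mul_ne_zero (mul_ne_zero (pow_ne_zero _ htC) (pow_ne_zero _ htC))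
          (mul_ne_zero (pow_ne_zero _ htC) hfacne))) htC
    ring

lemma taylor_int (n : ℕ) (h : ℝ → ℂ) (hC : ContDiff ℝ (n+1) h) (t : ℝ) :
    h 0 - ∑ j ∈ Finset.range (n+1), iteratedDeriv j h t * (-(t:ℂ))^j / (Nat.factorial j : ℂ)
      = ∫ s in t..(0:ℝ), iteratedDeriv (n+1) h s * (-(s:ℂ))^n / (Nat.factorial n : ℂ) := by
  have h1 : Continuous (iteratedDeriv (n+1) h) := hC.continuous_iteratedDeriv (n+1) le_rfl
  have hcont : Continuous (fun s : ℝ =>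
      iteratedDeriv (n+1) h s * (-(s:ℂ))^n / (Nat.factorial n : ℂ)) :=
    (h1.mul ((Complex.continuous_ofReal.neg).pow n)).div_const _
  have hFTC := intervalIntegral.integral_eq_sub_of_hasDerivAt
      (f := fun s : ℝ => ∑ j ∈ Finset.range (n+1),
        iteratedDeriv j h s * (-(s:ℂ))^j / (Nat.factorial j : ℂ))
      (f' := fun s : ℝ => iteratedDeriv (n+1) h s * (-(s:ℂ))^n / (Nat.factorial n : ℂ))
      (fun x _ => sum_hasDerivAt h n hC x) (hcont.intervalIntegrable t 0)
  rw [hFTC]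
  congr 1
  rw [eq_comm, Finset.sum_eq_single 0]
  · simp
  · intro j _ hj
    simp [zero_pow hj]
  · simp

lemma integral_form (m : ℕ) (h : ℝ → ℂ) (hC : ContDiff ℝ (m+1) h) (t : ℝ) (ht : t ≠ 0) :
    Fk (m+1) h t = (-1:ℂ)^(m+1) * ∫ α in (0:ℝ)..1,
      (iteratedDeriv (m+1) h t - iteratedDeriv (m+1) h (α * t)) * ((m+1:ℕ):ℂ) * (α:ℂ)^m := by
  have htC : (t:ℂ) ≠ 0 := Complex.ofReal_ne_zero.mpr ht
  have hm1 : ((m:ℂ)+1) ≠ 0 := Nat.cast_add_one_ne_zero m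
  have hfacm : ((Nat.factorial m : ℕ) : ℂ) ≠ 0 := by exact_mod_cast Nat.factorial_ne_zero m
  have hfacm1 : (((m+1).factorial : ℕ) : ℂ) ≠ 0 := by exact_mod_cast Nat.factorial_ne_zero _
  have hcontD : Continuous (iteratedDeriv (m+1) h) := hC.continuous_iteratedDeriv (m+1) le_rfl
  set A := iteratedDeriv (m+1) h t with hA
  set J := ∫ α in (0:ℝ)..1, iteratedDeriv (m+1) h (α * t) * (α:ℂ)^m with hJ
  have hint1 : IntervalIntegrable (fun α : ℝ => A * ((m+1:ℕ):ℂ) * (α:ℂ)^m)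
      MeasureTheory.volume 0 1 :=
    ((continuous_const.mul (Complex.continuous_ofReal.pow m))).intervalIntegrable 0 1
  have hint2 : IntervalIntegrable
      (fun α : ℝ => iteratedDeriv (m+1) h (α*t) * (α:ℂ)^m * ((m+1:ℕ):ℂ))
      MeasureTheory.volume 0 1 := by
    apply Continuous.intervalIntegrable
    exact ((hcontD.comp (continuous_id.mul continuous_const)).mul
      (Complex.continuous_ofReal.pow m)).mul continuous_const
  have hsplit : (∫ α in (0:ℝ)..1,
        (A - iteratedDeriv (m+1) h (α * t)) * ((m+1:ℕ):ℂ) * (α:ℂ)^m)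
      = (∫ α in (0:ℝ)..1, A * ((m+1:ℕ):ℂ) * (α:ℂ)^m)
        - ∫ α in (0:ℝ)..1, iteratedDeriv (m+1) h (α*t) * (α:ℂ)^m * ((m+1:ℕ):ℂ) := by
    rw [← intervalIntegral.integral_sub hint1 hint2]
    congr 1; funext α; ring
  have hpowint : (∫ α in (0:ℝ)..1, ((α:ℝ):ℂ)^m) = ((m:ℂ)+1)⁻¹ := by
    simp_rw [← Complex.ofReal_pow]
    rw [intervalIntegral.integral_ofReal, integral_pow]
    push_cast; norm_num
  have hconst : (∫ α in (0:ℝ)..1, A * ((m+1:ℕ):ℂ) * (α:ℂ)^m) = A := by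
    rw [intervalIntegral.integral_const_mul, hpowint]
    push_cast
    field_simp
  have hmulc : (∫ α in (0:ℝ)..1, iteratedDeriv (m+1) h (α*t) * (α:ℂ)^m * ((m+1:ℕ):ℂ))
      = J * ((m+1:ℕ):ℂ) := intervalIntegral.integral_mul_const _ _
  have hsub : (∫ s in t..(0:ℝ), iteratedDeriv (m+1) h s * (-(s:ℂ))^m / (Nat.factorial m : ℂ))
      = -((t:ℂ) * (((-1:ℂ)^m * (t:ℂ)^m / (Nat.factorial m : ℂ)) * J)) := by
    have h1 : (t : ℝ) • (∫ α in (1:ℝ)..0,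
          iteratedDeriv (m+1) h (α*t) * (-((α*t:ℝ):ℂ))^m / (Nat.factorial m : ℂ))
        = ∫ s in t..(0:ℝ), iteratedDeriv (m+1) h s * (-(s:ℂ))^m / (Nat.factorial m : ℂ) := by
      have := intervalIntegral.smul_integral_comp_mul_right (a := (1:ℝ)) (b := (0:ℝ))
        (fun s : ℝ => iteratedDeriv (m+1) h s * (-(s:ℂ))^m / (Nat.factorial m : ℂ)) t
      simpa using this
    rw [← h1, intervalIntegral.integral_symm]
    have h2 : (∫ α in (0:ℝ)..1,
          iteratedDeriv (m+1) h (α*t) * (-((α*t:ℝ):ℂ))^m / (Nat.factorial m : ℂ))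
        = ((-1:ℂ)^m * (t:ℂ)^m / (Nat.factorial m : ℂ)) * J := by
      rw [hJ, ← intervalIntegral.integral_const_mul]
      congr 1; funext α
      push_cast
      rw [show (-((α:ℂ)*(t:ℂ))) = (-1) * ((α:ℂ)*(t:ℂ)) by ring, mul_pow, mul_pow]
      ring
    rw [h2, smul_neg, Complex.real_smul]
  have hE : h 0 - ∑ j ∈ Finset.range (m+1),
        iteratedDeriv j h t * (-(t:ℂ))^j / (Nat.factorial j : ℂ)
      = -((t:ℂ) * (((-1:ℂ)^m * (t:ℂ)^m / (Nat.factorial m : ℂ)) * J)) :=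
    (taylor_int m h hC t).trans hsub
  rw [hsplit, hconst, hmulc, Fk, Finset.sum_range_succ, sub_add_eq_sub_sub, hE]
  have hfac1 : (((m+1).factorial : ℕ) : ℂ) = ((m:ℂ)+1) * ((Nat.factorial m : ℕ) : ℂ) := by
    rw [Nat.factorial_succ]; push_cast; ring
  have hnt : ∀ n : ℕ, (-(t:ℂ))^n = (-1)^n * (t:ℂ)^n := fun n => neg_pow _ _
  simp only [hfac1, hnt, inv_pow, Nat.cast_add, Nat.cast_one]
  field_simp
  ring

/-- For `k ≥ 1` and `h` `k` times continuously differentiable, for `t ≠ 0`,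
`(Λᵏh)(t) = -k! t^{-k} (h(0) - ∑_{j=0}^k h^{(j)}(t)(-t)^j/j!)
          = (-1)^k ∫_0^1 [h^{(k)}(t) - h^{(k)}(αt)] k α^{k-1} dα`,
and `(Λᵏh)(0) = 0`. -/
theorem stmt1 (k : ℕ) (hk : 0 < k) (h : ℝ → ℂ) (hCk : ContDiff ℝ k h) :
    (∀ t : ℝ, t ≠ 0 →
      (Lam^[k] h t
          = -(Nat.factorial k : ℂ) * ((t : ℂ)⁻¹) ^ k *
              (h 0 - ∑ j ∈ Finset.range (k + 1),
                iteratedDeriv j h t * (-(t : ℂ)) ^ j / (Nat.factorial j : ℂ)) ∧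
       Lam^[k] h t
          = (-1 : ℂ) ^ k *
              ∫ α in (0:ℝ)..1,
                (iteratedDeriv k h t - iteratedDeriv k h (α * t)) * (k : ℂ) * (α : ℂ) ^ (k - 1)))
      ∧ Lam^[k] h 0 = 0 := by
  obtain ⟨m, rfl⟩ := Nat.exists_eq_succ_of_ne_zero hk.ne'
  have hC : ContDiff ℝ (m+1) h := by exact_mod_cast hCk
  refine ⟨fun t ht => ⟨?_, ?_⟩, lam_iter_zero _ (Nat.succ_pos m) h⟩
  · exact formula m h hC t ht
  · exact (formula m h hC t ht).trans (integral_form m h hC t ht)
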